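/- Let E > 0 and suppose ψ : ℝ → ℂ² solves the free time-independent Lévy-Leblond equation with γ₊-eigenvalue E. Then there exist complex numbers a, b and twice-differentiable functions φ₁, φ₂ : ℝ → ℂ² such that for j = 1, 2 and all x ∈ ℝ: −i φⱼ′(x) = √(Eβ) φⱼ(x) and (D₊φⱼ)(x) = √(Eβ) φⱼ(x), and ψ(x) = a φ₁(x) + b γ¹ φ₂(−x) for all x ∈ ℝ. (Forward direction of the paper's theorem: every solution is a combination of a simultaneous eigenstate of P̂ and D₊ with positive eigenvalues and the image under P¹ of such an eigenstate.) -/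

import Mathlib

open Matrix

noncomputable section

/-- The gamma matrix `γ¹ = [[1,0],[0,−1]]`. -/
def γ1 : Matrix (Fin 2) (Fin 2) ℂ := !![1, 0; 0, -1]

/-- The gamma matrix `γ₊ = [[0,1],[0,0]]`. -/
def γp : Matrix (Fin 2) (Fin 2) ℂ := !![0, 1; 0, 0]

/-- The gamma matrix `γ₋ = [[0,0],[1,0]]`. -/
def γm : Matrix (Fin 2) (Fin 2) ℂ := !![0, 0; 1, 0]

/-- `ψ : ℝ → ℂ²` solves the free time-independent Lévy-Leblond equation
with `γ₊`-eigenvalue `E`: `ψ` is differentiable and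
`β γ₋ ψ(x) − i γ¹ ψ′(x) = E γ₊ ψ(x)` for all `x`. -/
def SolvesLL (β E : ℝ) (ψ : ℝ → (Fin 2 → ℂ)) : Prop :=
  Differentiable ℝ ψ ∧
    ∀ x : ℝ, (β : ℂ) • γm.mulVec (ψ x) - Complex.I • γ1.mulVec (deriv ψ x)
      = (E : ℂ) • γp.mulVec (ψ x)

/-- The operator `P̂`: `(P̂ψ)(x) = −i ψ′(x)`. -/
def Phat (ψ : ℝ → (Fin 2 → ℂ)) : ℝ → (Fin 2 → ℂ) :=
  fun x => (-Complex.I) • deriv ψ x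

/-- The operator `D₊`: `(D₊ψ)(x) = −(1/β) γ₊ ψ″(x) + β γ₋ ψ(x)`. -/
def Dplus (β : ℝ) (ψ : ℝ → (Fin 2 → ℂ)) : ℝ → (Fin 2 → ℂ) :=
  fun x => (-(1 / (β : ℂ))) • γp.mulVec (deriv (deriv ψ) x) + (β : ℂ) • γm.mulVec (ψ x)

/-- The operator `P¹`: `(P¹ψ)(x) = γ¹ ψ(−x)`. -/
def P1 (ψ : ℝ → (Fin 2 → ℂ)) : ℝ → (Fin 2 → ℂ) :=
  fun x => γ1.mulVec (ψ (-x))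

/-- forward direction.  If `E > 0` and `ψ` solves the free
time-independent Lévy-Leblond equation with `γ₊`-eigenvalue `E`, then `ψ` is a linear
combination `a φ₁ + b P¹φ₂` of simultaneous eigenstates `φ₁, φ₂` of `P̂` and `D₊`
with eigenvalue `√(Eβ) > 0`. -/
private lemma hexp_aux (c : ℂ) (x : ℝ) :
    HasDerivAt (fun x : ℝ => Complex.exp (c * x)) (c * Complex.exp (c * x)) x := by
  have h1 : HasDerivAt (fun x : ℝ => (c * x : ℂ)) c x := by
    simpa using (Complex.ofRealCLM.hasDerivAt (x := x)).const_mul c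
  simpa [mul_comm] using h1.cexp

private lemma ode_exp (c : ℂ) (f : ℝ → ℂ) (hf : ∀ x, HasDerivAt f (c * f x) x) (x : ℝ) :
    f x = Complex.exp (c * x) * f 0 := by
  set g : ℝ → ℂ := fun x => Complex.exp (-c * x) * f x with hg
  have hgd : ∀ y : ℝ, HasDerivAt g 0 y := by
    intro y
    have := (hexp_aux (-c) y).mul (hf y)
    convert this using 1
    · rfl
    · rw [hg]; funext t; simp only [Pi.mul_apply, neg_mul]
    ring
  have hconst : ∀ y z : ℝ, g y = g z :=
    is_const_of_deriv_eq_zero (fun y => (hgd y).differentiableAt) (fun y => (hgd y).deriv)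
  have h0 : g x = f 0 := by simpa [hg] using hconst x 0
  have he : Complex.exp (c * x) * Complex.exp (-c * x) = 1 := by
    rw [← Complex.exp_add, show c * x + -c * x = 0 by ring, Complex.exp_zero]
  calc f x = Complex.exp (c*x) * Complex.exp (-c*x) * f x := by rw [he, one_mul]
    _ = Complex.exp (c*x) * g x := by rw [hg]; ring
    _ = Complex.exp (c*x) * f 0 := by rw [h0]

theorem solvesLL_decomposition (β : ℝ) (hβ : 0 < β) (E : ℝ) (hE : 0 < E)
    (ψ : ℝ → (Fin 2 → ℂ)) (hψ : SolvesLL β E ψ) :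
    ∃ (a b : ℂ) (φ₁ φ₂ : ℝ → (Fin 2 → ℂ)),
      (Differentiable ℝ φ₁ ∧ Differentiable ℝ (deriv φ₁)) ∧
      (Differentiable ℝ φ₂ ∧ Differentiable ℝ (deriv φ₂)) ∧
      (∀ x : ℝ, Phat φ₁ x = ((Real.sqrt (E * β) : ℝ) : ℂ) • φ₁ x) ∧
      (∀ x : ℝ, Dplus β φ₁ x = ((Real.sqrt (E * β) : ℝ) : ℂ) • φ₁ x) ∧
      (∀ x : ℝ, Phat φ₂ x = ((Real.sqrt (E * β) : ℝ) : ℂ) • φ₂ x) ∧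
      (∀ x : ℝ, Dplus β φ₂ x = ((Real.sqrt (E * β) : ℝ) : ℂ) • φ₂ x) ∧
      (∀ x : ℝ, ψ x = a • φ₁ x + b • γ1.mulVec (φ₂ (-x))) := by
  obtain ⟨hdiff, heq⟩ := hψ
  set k : ℝ := Real.sqrt (E * β) with hkdef
  have hkpos : 0 < k := Real.sqrt_pos.mpr (by positivity)
  have hk2 : (k : ℂ) * k = (E : ℂ) * β := by
    have : k * k = E * β := Real.mul_self_sqrt (by positivity)
    exact_mod_cast this
  have hkne : (k : ℂ) ≠ 0 := by exact_mod_cast hkpos.ne'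
  have hEne : (E : ℂ) ≠ 0 := by exact_mod_cast hE.ne'
  have hβne : (β : ℂ) ≠ 0 := by exact_mod_cast hβ.ne'
  set v : Fin 2 → ℂ := ![(E : ℂ), (k : ℂ)] with hv
  set c : ℂ := Complex.I * k with hc
  set φ : ℝ → Fin 2 → ℂ := fun x => Complex.exp (c * x) • v with hφ
  -- derivatives of φ
  have hφd : ∀ x : ℝ, HasDerivAt φ ((c * Complex.exp (c * x)) • v) x :=
    fun x => (hexp_aux c x).smul_const v
  have hderφ : deriv φ = fun x : ℝ => (c * Complex.exp (c * x)) • v :=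
    funext fun x => (hφd x).deriv
  have hφd2 : ∀ x : ℝ, HasDerivAt (deriv φ) ((c * (c * Complex.exp (c * x))) • v) x := by
    intro x
    rw [hderφ]
    exact ((hexp_aux c x).const_mul c).smul_const v
  have hderφ2 : deriv (deriv φ) = fun x : ℝ => (c * (c * Complex.exp (c * x))) • v :=
    funext fun x => (hφd2 x).deriv
  have hφdiff : Differentiable ℝ φ := fun x => (hφd x).differentiableAt
  have hφdiff2 : Differentiable ℝ (deriv φ) := fun x => (hφd2 x).differentiableAt
  -- eigen equations
  have hPhat : ∀ x, Phat φ x = (k : ℂ) • φ x := by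
    intro x
    have hcc : (-Complex.I) * (c * Complex.exp (c * x)) = (k : ℂ) * Complex.exp (c * x) := by
      rw [hc]
      have : (-Complex.I) * (Complex.I * k * Complex.exp (Complex.I * k * x))
          = -(Complex.I * Complex.I) * ((k : ℂ) * Complex.exp (Complex.I * k * x)) := by ring
      rw [this, Complex.I_mul_I]
      ring
    show (-Complex.I) • deriv φ x = _
    rw [hderφ]
    simp only [hφ, smul_smul, hcc]
  have hderφ2' : deriv (deriv φ) = fun x : ℝ => (-((E:ℂ) * β) * Complex.exp (c * x)) • v := by
    rw [hderφ2]
    funext x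
    congr 1
    have h1 : c * (c * Complex.exp (c * x)) = (Complex.I * Complex.I) * (((k:ℂ) * k) * Complex.exp (c * x)) := by
      rw [hc]; ring
    rw [h1, Complex.I_mul_I, hk2]
    ring
  have hDplus : ∀ x, Dplus β φ x = (k : ℂ) • φ x := by
    intro x
    funext i
    fin_cases i <;>
      simp only [Dplus, hderφ2'] <;>
      simp only [hφ, hv, γp, γm, Pi.add_apply,
        Pi.smul_apply, Matrix.mulVec, dotProduct, Fin.sum_univ_two, smul_eq_mul,
        Matrix.cons_val', Matrix.cons_val_zero, Matrix.cons_val_one, Matrix.head_cons,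
        Matrix.empty_val', Matrix.cons_val_fin_one, Matrix.head_fin_const, Matrix.of_apply,
          Fin.zero_eta, Fin.mk_one, Fin.isValue] <;>
      field_simp
    · ring
    · linear_combination (-1 : ℂ) * hk2
  have hcomp : ∀ (x : ℝ) (i : Fin 2), HasDerivAt (fun y => ψ y i) (deriv ψ x i) x := by
    intro x i
    exact hasDerivAt_pi.mp (hdiff x).hasDerivAt i
  have heq0 : ∀ x, deriv ψ x 0 = Complex.I * E * ψ x 1 := by
    intro x
    have h := congrFun (heq x) 0
    simp [γm, γp, γ1, Matrix.mulVec, dotProduct, Fin.sum_univ_two, Matrix.vecHead, Matrix.vecTail] at h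
    linear_combination Complex.I * h + deriv ψ x 0 * Complex.I_sq
  have heq1 : ∀ x, deriv ψ x 1 = Complex.I * β * ψ x 0 := by
    intro x
    have h := congrFun (heq x) 1
    simp [γm, γp, γ1, Matrix.mulVec, dotProduct, Fin.sum_univ_two, Matrix.vecHead, Matrix.vecTail] at h
    linear_combination -Complex.I * h + deriv ψ x 1 * Complex.I_sq
  -- the combinations u, w satisfy first-order ODEs
  set u : ℝ → ℂ := fun x => (k : ℂ) * ψ x 0 + (E : ℂ) * ψ x 1 with hu
  set w : ℝ → ℂ := fun x => (k : ℂ) * ψ x 0 - (E : ℂ) * ψ x 1 with hw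
  have hud : ∀ x, HasDerivAt u (c * u x) x := by
    intro x
    have h := ((hcomp x 0).const_mul (k : ℂ)).add ((hcomp x 1).const_mul (E : ℂ))
    convert h using 1
    · rfl
    · rfl
    rw [heq0 x, heq1 x, hu, hc]
    simp only []
    ring_nf
    linear_combination Complex.I * ψ x 0 * hk2
  have hwd : ∀ x, HasDerivAt w (-c * w x) x := by
    intro x
    have h := ((hcomp x 0).const_mul (k : ℂ)).sub ((hcomp x 1).const_mul (E : ℂ))
    convert h using 1
    · rfl
    · rfl
    rw [heq0 x, heq1 x, hw, hc]
    simp only []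
    ring_nf
    linear_combination -(Complex.I * ψ x 0) * hk2
  have huv : ∀ x, u x = Complex.exp (c * x) * u 0 := ode_exp c u hud
  have hwv : ∀ x, w x = Complex.exp (-c * x) * w 0 := ode_exp (-c) w hwd
  refine ⟨u 0 / (2 * k * E), w 0 / (2 * k * E), φ, φ, ⟨hφdiff, hφdiff2⟩, ⟨hφdiff, hφdiff2⟩,
    hPhat, hDplus, hPhat, hDplus, ?_⟩
  intro x
  have hux := huv x
  have hwx := hwv x
  rw [hu] at hux
  rw [hw] at hwx
  rw [neg_mul] at hwx
  have hexpneg : Complex.exp (c * ((-x : ℝ) : ℂ)) = Complex.exp (-(c * x)) := by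
    rw [show (c * ((-x : ℝ) : ℂ)) = -(c * x) by push_cast; ring]
  funext i
  fin_cases i <;>
    simp only [hφ, hv, γ1, Pi.add_apply, Pi.smul_apply, Matrix.mulVec, dotProduct,
      Fin.sum_univ_two, smul_eq_mul, Matrix.cons_val', Matrix.cons_val_zero,
      Matrix.cons_val_one, Matrix.head_cons, Matrix.empty_val', Matrix.cons_val_fin_one,
      Matrix.head_fin_const, hexpneg, Fin.mk_zero, Fin.mk_one, Fin.isValue, Matrix.of_apply,
      Fin.zero_eta]
  · field_simp
    linear_combination (E:ℂ) * hux + (E:ℂ) * hwx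
  · field_simp
    linear_combination (k:ℂ) * hux - (k:ℂ) * hwx
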